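/- Suppose (u, v) solves u' = ru + sv, v' = su - rv with (u,v) never zero, and α is a differentiable argument function of u + iv. Then θ(t) := 2α(t) satisfies the bicycle equation θ' = Y' cos θ - X' sin θ, where X'(t) = 2r(t) and Y'(t) = 2s(t). -/

import Mathlib

open Real

theorem stmt3
    (r s u v α X Y : ℝ → ℝ)
    (hr : Continuous r) (hs : Continuous s)
    (hu : ∀ t, HasDerivAt u (r t * u t + s t * v t) t)
    (hv : ∀ t, HasDerivAt v (s t * u t - r t * v t) t)
    (hpos : ∀ t, u t ^ 2 + v t ^ 2 > 0)
    (hcos : ∀ t, Real.cos (α t) = u t / Real.sqrt (u t ^ 2 + v t ^ 2))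
    (hsin : ∀ t, Real.sin (α t) = v t / Real.sqrt (u t ^ 2 + v t ^ 2))
    (hα : Differentiable ℝ α)
    (hX : ∀ t, HasDerivAt X (2 * r t) t)
    (hY : ∀ t, HasDerivAt Y (2 * s t) t)
    (θ : ℝ → ℝ) (hθ : ∀ t, θ t = 2 * α t) :
    ∀ t, HasDerivAt θ (2 * s t * Real.cos (θ t) - 2 * r t * Real.sin (θ t)) t := by
  intro t
  set ρ := Real.sqrt (u t ^ 2 + v t ^ 2) with hρdef
  have hρ : 0 < ρ := Real.sqrt_pos.mpr (hpos t)
  have hρ2 : ρ ^ 2 = u t ^ 2 + v t ^ 2 := Real.sq_sqrt (le_of_lt (hpos t))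
  have hd : HasDerivAt α (deriv α t) t := (hα t).hasDerivAt
  set a := deriv α t with hadef
  -- the zero function
  have hF : (fun x => v x * Real.cos (α x) - u x * Real.sin (α x)) = fun _ => (0:ℝ) := by
    funext x
    rw [hcos x, hsin x]
    ring
  have hcos' : HasDerivAt (fun x => Real.cos (α x)) (-Real.sin (α t) * a) t :=
    (Real.hasDerivAt_cos (α t)).comp t hd
  have hsin' : HasDerivAt (fun x => Real.sin (α x)) (Real.cos (α t) * a) t :=
    (Real.hasDerivAt_sin (α t)).comp t hd
  have hF' : HasDerivAt (fun x => v x * Real.cos (α x) - u x * Real.sin (α x))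
      ((s t * u t - r t * v t) * Real.cos (α t) + v t * (-Real.sin (α t) * a)
        - ((r t * u t + s t * v t) * Real.sin (α t) + u t * (Real.cos (α t) * a))) t :=
    ((hv t).mul hcos').sub ((hu t).mul hsin')
  rw [hF] at hF'
  have hD : (s t * u t - r t * v t) * Real.cos (α t) + v t * (-Real.sin (α t) * a)
      - ((r t * u t + s t * v t) * Real.sin (α t) + u t * (Real.cos (α t) * a)) = 0 :=
    hF'.unique (hasDerivAt_const t 0)
  have hu_eq : u t = ρ * Real.cos (α t) := by
    rw [hcos t, ← hρdef]; field_simp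
  have hv_eq : v t = ρ * Real.sin (α t) := by
    rw [hsin t, ← hρdef]; field_simp
  have hsc : Real.sin (α t) ^ 2 + Real.cos (α t) ^ 2 = 1 := Real.sin_sq_add_cos_sq (α t)
  have ha : a = s t * (Real.cos (α t) ^ 2 - Real.sin (α t) ^ 2)
      - 2 * r t * Real.sin (α t) * Real.cos (α t) := by
    rw [hu_eq, hv_eq] at hD
    have key : ρ * a = ρ * (s t * (Real.cos (α t) ^ 2 - Real.sin (α t) ^ 2)
        - 2 * r t * Real.sin (α t) * Real.cos (α t)) := by
      linear_combination -hD - ρ * a * hsc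
    exact mul_left_cancel₀ (ne_of_gt hρ) key
  have hθfun : θ = fun x => 2 * α x := funext hθ
  have hder : HasDerivAt θ (2 * a) t := by
    rw [hθfun]; exact hd.const_mul 2
  convert hder using 1
  rw [hθ t, Real.cos_two_mul, Real.sin_two_mul, ha]
  linear_combination 2 * s t * hsc
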